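/- Let A be a commutative ring, I an ideal, and M, N two A-modules. Then there is a natural isomorphism of I-adic completions: lim_k (M ⊗ N)/I^k(M ⊗ N) ≅ lim_k (M̂ ⊗ N̂)/I^k(M̂ ⊗ N̂), where M̂, N̂ denote the I-adic completions of M and N. -/

import Mathlib

universe u

open TensorProduct

section Aux

variable {R : Type*} [CommRing R] (I : Ideal R)
variable {M : Type*} [AddCommGroup M] [Module R M]
variable {N : Type*} [AddCommGroup N] [Module R N]

namespace AdicTensorAux

open AdicCompletion

/-- `R`-linear reduction of a linear map modulo `J • ⊤`. -/
def redQ (J : Ideal R) (f : M →ₗ[R] N) :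
    M ⧸ (J • ⊤ : Submodule R M) →ₗ[R] N ⧸ (J • ⊤ : Submodule R N) :=
  Submodule.mapQ _ _ f (by
    intro x hx
    refine Submodule.smul_induction_on hx (fun r hr x _ ↦ ?_) (fun x y hx hy ↦ ?_)
    · simpa using Submodule.smul_mem_smul hr Submodule.mem_top
    · simpa using Submodule.add_mem _ hx hy)

@[simp]
lemma redQ_mk (J : Ideal R) (f : M →ₗ[R] N) (x : M) :
    redQ J f (Submodule.Quotient.mk x) = Submodule.Quotient.mk (f x) := rfl

lemma coe_reduceModIdeal (J : Ideal R) (f : M →ₗ[R] N) :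
    ⇑(f.reduceModIdeal J) = ⇑(redQ J f) := by
  funext x
  obtain ⟨y, rfl⟩ := Submodule.Quotient.mk_surjective _ x
  rfl

lemma transition_redQ (f : M →ₗ[R] N) {m n : ℕ} (hmn : m ≤ n)
    (x : M ⧸ (I ^ n • ⊤ : Submodule R M)) :
    AdicCompletion.transitionMap I N hmn (redQ (I ^ n) f x) =
      redQ (I ^ m) f (AdicCompletion.transitionMap I M hmn x) := by
  obtain ⟨y, rfl⟩ := Submodule.Quotient.mk_surjective _ x
  rfl

/-- If a linear map is bijective modulo every `I ^ n`, the induced map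
on adic completions is bijective. -/
lemma map_bijective_of_redQ_bijective (f : M →ₗ[R] N)
    (h : ∀ n : ℕ, Function.Bijective (redQ (I ^ n) f)) :
    Function.Bijective (AdicCompletion.map I f) := by
  have hval : ∀ (x : AdicCompletion I M) (n : ℕ),
      (AdicCompletion.map I f x).val n = redQ (I ^ n) f (x.val n) := by
    intro x n
    rw [AdicCompletion.map_val_apply, coe_reduceModIdeal]
  constructor
  · intro x y hxy
    apply AdicCompletion.ext
    intro n
    apply (h n).1
    rw [← hval, ← hval, hxy]
  · intro y
    refine ⟨⟨fun n => Function.surjInv (h n).2 (y.val n), ?_⟩, ?_⟩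
    · intro m n hmn
      apply (h m).1
      rw [← transition_redQ I f hmn, Function.surjInv_eq (h n).2,
        Function.surjInv_eq (h m).2]
      exact y.property hmn
    · apply AdicCompletion.ext
      intro n
      refine (hval _ n).trans ?_
      exact Function.surjInv_eq (h n).2 (y.val n)

lemma exists_finset_sum_smul {J : Ideal R} {s : Finset R}
    (hs : Submodule.span R (s : Set R) = J) (S : Submodule R M) {z : M} (hz : z ∈ J • S) :
    ∃ c : R → M, (∀ t, c t ∈ S) ∧ z = ∑ t ∈ s, t • c t := by
  refine Submodule.smul_induction_on hz ?_ ?_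
  · intro r hr m hm
    rw [← hs] at hr
    obtain ⟨f, -, hf⟩ := Submodule.mem_span_finset.1 hr
    refine ⟨fun t => f t • m, fun t => Submodule.smul_mem _ _ hm, ?_⟩
    rw [← hf, Finset.sum_smul]
    refine Finset.sum_congr rfl fun t _ => ?_
    rw [smul_eq_mul, mul_comm, mul_smul]
  · rintro u v ⟨c, hc, rfl⟩ ⟨d, hd, rfl⟩
    refine ⟨fun t => c t + d t, fun t => Submodule.add_mem _ (hc t) (hd t), ?_⟩
    rw [← Finset.sum_add_distrib]
    exact Finset.sum_congr rfl fun t _ => (smul_add t (c t) (d t)).symm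

variable (M) in
lemma val_eq_zero_of_mem_smul (n : ℕ) {x : AdicCompletion I M}
    (hx : x ∈ (I ^ n • ⊤ : Submodule R (AdicCompletion I M))) : x.val n = 0 := by
  refine Submodule.smul_induction_on hx ?_ ?_
  · intro r hr z _
    obtain ⟨m, hm⟩ := Submodule.Quotient.mk_surjective _ (z.val n)
    have h1 : (r • z).val n = r • z.val n := rfl
    rw [h1, ← hm, ← Submodule.Quotient.mk_smul]
    exact (Submodule.Quotient.mk_eq_zero _).2
      (Submodule.smul_mem_smul hr Submodule.mem_top)
  · intro a b ha hb
    have h1 : (a + b).val n = a.val n + b.val n := rfl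
    rw [h1, ha, hb, add_zero]

variable (M) in
/-- Stacks 05GG: if `eval n x = 0` then `x ∈ I ^ n • ⊤`. Needs `I ^ n` finitely generated. -/
lemma mem_smul_of_val_eq_zero [IsNoetherianRing R] (n : ℕ) {x : AdicCompletion I M}
    (hx : x.val n = 0) : x ∈ (I ^ n • ⊤ : Submodule R (AdicCompletion I M)) := by
  obtain ⟨a, rfl⟩ := AdicCompletion.mk_surjective I M x
  obtain ⟨s, hs⟩ := (IsNoetherian.noetherian (I ^ n) : Submodule.FG (I ^ n))
  have hxn : a n ∈ (I ^ n • ⊤ : Submodule R M) := by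
    rw [← Submodule.Quotient.mk_eq_zero]
    exact hx
  -- differences of the (shifted) sequence lie in `I ^ n • (I ^ m • ⊤)`
  have hpow : ∀ m : ℕ, (I ^ (m + n) • ⊤ : Submodule R M) = I ^ n • (I ^ m • ⊤) := by
    intro m
    rw [add_comm, pow_add, mul_smul]
  have hdiff : ∀ m : ℕ, a (m + 1 + n) - a (m + n) ∈ (I ^ n • (I ^ m • ⊤) : Submodule R M) := by
    intro m
    rw [← hpow]
    have := (a.property (show m + n ≤ m + 1 + n by omega))
    rw [SModEq.sub_mem] at this
    simpa using Submodule.neg_mem _ this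
  choose d hd1 hd2 using fun m => exists_finset_sum_smul hs _ (hdiff m)
  obtain ⟨e, -, he2⟩ := exists_finset_sum_smul hs ⊤ hxn
  set c : R → ℕ → M := fun t m => e t + ∑ k ∈ Finset.range m, d k t with hc
  have hsum : ∀ m : ℕ, ∑ t ∈ s, t • c t m = a (m + n) := by
    intro m
    induction m with
    | zero =>
        simp only [hc, Finset.range_zero, Finset.sum_empty, add_zero, Nat.zero_add]
        exact he2.symm
    | succ m ih =>
        have hstep : ∀ t, c t (m + 1) = c t m + d m t := by
          intro t
          simp [hc, Finset.sum_range_succ, add_assoc]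
        calc ∑ t ∈ s, t • c t (m + 1)
            = ∑ t ∈ s, (t • c t m + t • d m t) := by
              refine Finset.sum_congr rfl fun t _ => ?_
              rw [hstep t, smul_add]
          _ = (∑ t ∈ s, t • c t m) + ∑ t ∈ s, t • d m t := Finset.sum_add_distrib
          _ = a (m + n) + (a (m + 1 + n) - a (m + n)) := by rw [ih, ← hd2 m]
          _ = a (m + 1 + n) := by abel
  have hcauchy : ∀ t, ∀ m : ℕ, c t m ≡ c t (m + 1) [SMOD (I ^ m • ⊤ : Submodule R M)] := by
    intro t m
    rw [SModEq.sub_mem]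
    have : c t m - c t (m + 1) = -(d m t) := by
      simp only [hc, Finset.sum_range_succ]
      abel
    rw [this]
    exact Submodule.neg_mem _ (hd1 m t)
  set ca : R → AdicCauchySequence I M :=
    fun t => AdicCauchySequence.mk I M (c t) (hcauchy t) with hca
  have heq : AdicCompletion.mk I M a = ∑ t ∈ s, t • AdicCompletion.mk I M (ca t) := by
    apply AdicCompletion.ext
    intro m
    have hlhs : (AdicCompletion.mk I M a).val m =
        Submodule.Quotient.mk (p := (I ^ m • ⊤ : Submodule R M)) (a m) := rfl
    have hrhs : (∑ t ∈ s, t • AdicCompletion.mk I M (ca t)).val m =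
        ∑ t ∈ s, t • (Submodule.Quotient.mk (p := (I ^ m • ⊤ : Submodule R M)) (c t m)) := by
      rw [AdicCompletion.val_sum_apply]
      exact Finset.sum_congr rfl fun t _ => rfl
    rw [hlhs, hrhs]
    have : ∑ t ∈ s, t • (Submodule.Quotient.mk (p := (I ^ m • ⊤ : Submodule R M)) (c t m)) =
        Submodule.Quotient.mk (∑ t ∈ s, t • c t m) := by
      simp only [← Submodule.mkQ_apply, ← map_smul, ← map_sum]
    rw [this, hsum m]
    exact (AdicCauchySequence.mk_eq_mk (Nat.le_add_right m n) a).symm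
  rw [heq]
  refine Submodule.sum_mem _ fun t ht => ?_
  refine Submodule.smul_mem_smul ?_ Submodule.mem_top
  rw [← hs]
  exact Submodule.subset_span ht

variable (M) in
lemma redQ_of_bijective [IsNoetherianRing R] (n : ℕ) :
    Function.Bijective (redQ (I ^ n) (AdicCompletion.of I M)) := by
  constructor
  · intro x y hxy
    obtain ⟨x, rfl⟩ := Submodule.Quotient.mk_surjective _ x
    obtain ⟨y, rfl⟩ := Submodule.Quotient.mk_surjective _ y
    simp only [redQ_mk] at hxy
    rw [Submodule.Quotient.eq] at hxy ⊢
    have h1 : AdicCompletion.of I M x - AdicCompletion.of I M y =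
        AdicCompletion.of I M (x - y) := (map_sub _ _ _).symm
    rw [h1] at hxy
    have h2 := val_eq_zero_of_mem_smul I M n hxy
    rw [AdicCompletion.of_apply] at h2
    rwa [← Submodule.Quotient.mk_eq_zero]
  · intro y
    obtain ⟨z, rfl⟩ := Submodule.Quotient.mk_surjective _ y
    obtain ⟨m, hm⟩ := Submodule.Quotient.mk_surjective _ (z.val n)
    refine ⟨Submodule.Quotient.mk m, ?_⟩
    rw [redQ_mk, Submodule.Quotient.eq]
    apply mem_smul_of_val_eq_zero
    have h1 : (AdicCompletion.of I M m - z).val n = (AdicCompletion.of I M m).val n - z.val n :=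
      rfl
    rw [h1, AdicCompletion.of_apply, Submodule.mkQ_apply, hm, sub_self]

section Tensor

variable {M₂ : Type*} [AddCommGroup M₂] [Module R M₂]
variable {N₂ : Type*} [AddCommGroup N₂] [Module R N₂]

variable (M N) in
lemma range_sup_eq (J : Ideal R) :
    (LinearMap.range (TensorProduct.map (J • ⊤ : Submodule R M).subtype
        (LinearMap.id (M := N))) ⊔
      LinearMap.range (TensorProduct.map (LinearMap.id (M := M))
        (J • ⊤ : Submodule R N).subtype)) = (J • ⊤ : Submodule R (M ⊗[R] N)) := by
  apply le_antisymm
  · refine sup_le ?_ ?_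
    · rintro _ ⟨w, rfl⟩
      induction w with
      | zero => simp
      | tmul x y =>
          obtain ⟨a, ha⟩ := x
          have key : ∀ b ∈ (J • ⊤ : Submodule R M),
              b ⊗ₜ[R] y ∈ (J • ⊤ : Submodule R (M ⊗[R] N)) := by
            intro b hb
            refine Submodule.smul_induction_on hb ?_ ?_
            · intro r hr m _
              rw [← TensorProduct.smul_tmul']
              exact Submodule.smul_mem_smul hr Submodule.mem_top
            · intro u v hu hv
              rw [TensorProduct.add_tmul]
              exact Submodule.add_mem _ hu hv
          simpa using key a ha
      | add u v hu hv =>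
          rw [map_add]
          exact Submodule.add_mem _ hu hv
    · rintro _ ⟨w, rfl⟩
      induction w with
      | zero => simp
      | tmul x y =>
          obtain ⟨a, ha⟩ := y
          have key : ∀ b ∈ (J • ⊤ : Submodule R N),
              x ⊗ₜ[R] b ∈ (J • ⊤ : Submodule R (M ⊗[R] N)) := by
            intro b hb
            refine Submodule.smul_induction_on hb ?_ ?_
            · intro r hr m _
              rw [TensorProduct.tmul_smul]
              exact Submodule.smul_mem_smul hr Submodule.mem_top
            · intro u v hu hv
              rw [TensorProduct.tmul_add]
              exact Submodule.add_mem _ hu hv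
          simpa using key a ha
      | add u v hu hv =>
          rw [map_add]
          exact Submodule.add_mem _ hu hv
  · rw [Submodule.smul_le]
    intro r hr z hz
    clear hz
    induction z with
    | zero => simp
    | tmul x y =>
        rw [TensorProduct.smul_tmul']
        refine Submodule.mem_sup_left ⟨(⟨r • x, Submodule.smul_mem_smul hr
          Submodule.mem_top⟩ : (J • ⊤ : Submodule R M)) ⊗ₜ[R] y, ?_⟩
        simp
    | add u v hu hv =>
        rw [smul_add]
        exact Submodule.add_mem _ hu hv

variable (M N) in
/-- `(M ⧸ J•⊤) ⊗ (N ⧸ J•⊤) ≃ (M ⊗ N) ⧸ J•⊤`. -/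
noncomputable def quotTensorQuotEquiv (J : Ideal R) :
    ((M ⧸ (J • ⊤ : Submodule R M)) ⊗[R] (N ⧸ (J • ⊤ : Submodule R N))) ≃ₗ[R]
      (M ⊗[R] N) ⧸ (J • ⊤ : Submodule R (M ⊗[R] N)) :=
  TensorProduct.quotientTensorQuotientEquiv _ _ ≪≫ₗ
    Submodule.quotEquivOfEq _ _ (range_sup_eq M N J)

@[simp]
lemma quotTensorQuotEquiv_mk_tmul_mk (J : Ideal R) (x : M) (y : N) :
    quotTensorQuotEquiv M N J (Submodule.Quotient.mk x ⊗ₜ[R] Submodule.Quotient.mk y) =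
      Submodule.Quotient.mk (x ⊗ₜ[R] y) := by
  simp [quotTensorQuotEquiv, Submodule.quotEquivOfEq_mk]

lemma redQ_tensor_bijective (J : Ideal R) (f : M →ₗ[R] M₂) (g : N →ₗ[R] N₂)
    (hf : Function.Bijective (redQ J f)) (hg : Function.Bijective (redQ J g)) :
    Function.Bijective (redQ J (TensorProduct.map f g)) := by
  have hsq : (redQ J (TensorProduct.map f g)) ∘ₗ (quotTensorQuotEquiv M N J : _ →ₗ[R] _) =
      (quotTensorQuotEquiv M₂ N₂ J : _ →ₗ[R] _) ∘ₗ TensorProduct.map (redQ J f) (redQ J g) := by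
    apply TensorProduct.ext'
    intro x y
    obtain ⟨x, rfl⟩ := Submodule.Quotient.mk_surjective _ x
    obtain ⟨y, rfl⟩ := Submodule.Quotient.mk_surjective _ y
    simp
  have hmap : Function.Bijective ⇑(TensorProduct.map (redQ J f) (redQ J g)) := by
    have heq : ⇑(TensorProduct.map (redQ J f) (redQ J g)) =
        ⇑(TensorProduct.congr (LinearEquiv.ofBijective _ hf) (LinearEquiv.ofBijective _ hg)) :=
      rfl
    rw [heq]
    exact (TensorProduct.congr (LinearEquiv.ofBijective _ hf)
      (LinearEquiv.ofBijective _ hg)).bijective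
  have hfun : ⇑(redQ J (TensorProduct.map f g)) =
      ⇑(quotTensorQuotEquiv M₂ N₂ J) ∘ ⇑(TensorProduct.map (redQ J f) (redQ J g)) ∘
        ⇑((quotTensorQuotEquiv M N J).symm) := by
    funext z
    have h1 := congrArg (fun h => h ((quotTensorQuotEquiv M N J).symm z)) hsq
    simpa using h1
  rw [hfun]
  exact (quotTensorQuotEquiv M₂ N₂ J).bijective.comp
    (hmap.comp (quotTensorQuotEquiv M N J).symm.bijective)

end Tensor

end AdicTensorAux

end Aux

/-- Let `A` be a commutative Noetherian ring, `I` an ideal and `M`, `N` two `A`-modules.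
The canonical maps `M → M̂`, `N → N̂` induce a natural isomorphism of `I`-adic completions
`(M ⊗ N)^∧ ≅ (M̂ ⊗ N̂)^∧`. -/
theorem adicCompletion_tensor_completion_bijective {A : Type u} [CommRing A]
    [IsNoetherianRing A] (I : Ideal A) (M N : Type u) [AddCommGroup M] [Module A M]
    [AddCommGroup N] [Module A N] :
    Function.Bijective
      (AdicCompletion.map I
        (TensorProduct.map (AdicCompletion.of I M) (AdicCompletion.of I N))) := by
  apply AdicTensorAux.map_bijective_of_redQ_bijective
  intro n
  exact AdicTensorAux.redQ_tensor_bijective (I ^ n) _ _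
    (AdicTensorAux.redQ_of_bijective I M n) (AdicTensorAux.redQ_of_bijective I N n)
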